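/- Every connected bipartite graph G has a spanning tree T with α(T) = α(G). -/

import Mathlib

open Finset

variable {V : Type*}

/-- A stable (independent) set of vertices of `G`. -/
def IsStableSet (G : SimpleGraph V) (S : Finset V) : Prop :=
  ∀ u ∈ S, ∀ v ∈ S, ¬ G.Adj u v

/-- The stability number `α(G)`: the maximum cardinality of a stable set. -/
noncomputable def stabNum (G : SimpleGraph V) [Fintype V] : ℕ :=
  sSup {n : ℕ | ∃ S : Finset V, IsStableSet G S ∧ S.card = n}

/-- A stability system of `G`: a stable set of maximum cardinality. -/
def IsStabSystem (G : SimpleGraph V) [Fintype V] (S : Finset V) : Prop :=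
  IsStableSet G S ∧ S.card = stabNum G

/-- `G` is α⁻-stable: deleting any edge leaves the stability number unchanged. -/
def AlphaMinusStable (G : SimpleGraph V) [Fintype V] : Prop :=
  ∀ u v : V, G.Adj u v → stabNum (G.deleteEdges {s(u, v)}) = stabNum G

/-- `G` is α⁺-stable: adding any edge of the complement leaves the stability
number unchanged. -/
def AlphaPlusStable (G : SimpleGraph V) [Fintype V] : Prop :=
  ∀ u v : V, u ≠ v → ¬ G.Adj u v →
    stabNum (G ⊔ SimpleGraph.fromEdgeSet {s(u, v)}) = stabNum G

/-- A matching of `G`, viewed as a set of pairwise non-incident edges. -/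
def IsMatchingSet (G : SimpleGraph V) (M : Finset (Sym2 V)) : Prop :=
  (↑M : Set (Sym2 V)) ⊆ G.edgeSet ∧
    ∀ e ∈ M, ∀ f ∈ M, e ≠ f → ∀ v : V, ¬ (v ∈ e ∧ v ∈ f)

/-- The matching number `μ(G)`. -/
noncomputable def matchNum (G : SimpleGraph V) [Fintype V] : ℕ :=
  sSup {n : ℕ | ∃ M : Finset (Sym2 V), IsMatchingSet G M ∧ M.card = n}

/-- A maximum matching of `G`. -/
def IsMaximumMatching (G : SimpleGraph V) [Fintype V] (M : Finset (Sym2 V)) : Prop :=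
  IsMatchingSet G M ∧ M.card = matchNum G

/-- A perfect matching of `G`: a matching covering every vertex. -/
def IsPerfectMatchingSet (G : SimpleGraph V) (M : Finset (Sym2 V)) : Prop :=
  IsMatchingSet G M ∧ ∀ v : V, ∃ e ∈ M, v ∈ e

/-- A pendant vertex: a vertex of degree one. -/
def IsPendant (G : SimpleGraph V) (v : V) : Prop :=
  (G.neighborSet v).ncard = 1

/-- A set `D` is 2-dominating: every vertex outside `D` has at least two
neighbors in `D`. -/
def Is2Dominating (G : SimpleGraph V) (D : Finset V) : Prop :=
  ∀ v : V, v ∉ D → 2 ≤ ({u : V | u ∈ D ∧ G.Adj v u}).ncard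

/-- A chordal graph: no induced cycle on four or more vertices. -/
def IsChordal (G : SimpleGraph V) : Prop :=
  ∀ n : ℕ, 4 ≤ n → IsEmpty (SimpleGraph.cycleGraph n ↪g G)

/-- A bipartite graph: the vertex set is partitioned into two stable sets. -/
def IsBipartiteGr (G : SimpleGraph V) [Fintype V] [DecidableEq V] : Prop :=
  ∃ C : Finset V, IsStableSet G C ∧ IsStableSet G Cᶜ

/-- A strong unique independence graph: a graph with a unique stability system
whose complement is also stable. -/
def IsStrongUniqueIndep (G : SimpleGraph V) [Fintype V] [DecidableEq V] : Prop :=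
  ∃ S : Finset V, IsStabSystem G S ∧ (∀ S' : Finset V, IsStabSystem G S' → S' = S) ∧
    IsStableSet G Sᶜ

/-- A bistable bipartite graph: its two color classes are its only two
stability systems. -/
def IsBistable (G : SimpleGraph V) [Fintype V] [DecidableEq V] : Prop :=
  ∃ A : Finset V, IsStableSet G A ∧ IsStableSet G Aᶜ ∧
    IsStabSystem G A ∧ IsStabSystem G Aᶜ ∧ A ≠ Aᶜ ∧
    ∀ S : Finset V, IsStabSystem G S → S = A ∨ S = Aᶜ

/-- A vertex cover of `G`. -/
def IsVertexCover (G : SimpleGraph V) (C : Finset V) : Prop :=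
  ∀ u v : V, G.Adj u v → u ∈ C ∨ v ∈ C

/-- A minimum vertex cover of `G`. -/
def IsMinVertexCover (G : SimpleGraph V) [Fintype V] (C : Finset V) : Prop :=
  IsVertexCover G C ∧ ∀ C' : Finset V, IsVertexCover G C' → C.card ≤ C'.card

set_option linter.unusedSectionVars false
set_option linter.unusedVariables false

section Aux
variable [Fintype V] [DecidableEq V]

lemma stabSet_bdd (G : SimpleGraph V) :
    BddAbove {n : ℕ | ∃ S : Finset V, IsStableSet G S ∧ S.card = n} :=
  ⟨Fintype.card V, fun n ⟨S, _, hS⟩ => hS ▸ S.card_le_univ⟩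

lemma stabSet_nonempty (G : SimpleGraph V) :
    {n : ℕ | ∃ S : Finset V, IsStableSet G S ∧ S.card = n}.Nonempty :=
  ⟨0, ∅, fun u hu => by simp at hu, rfl⟩

lemma card_le_stabNum (G : SimpleGraph V) {S : Finset V} (hS : IsStableSet G S) :
    S.card ≤ stabNum G :=
  le_csSup (stabSet_bdd G) ⟨S, hS, rfl⟩

lemma exists_stabSystem (G : SimpleGraph V) :
    ∃ S : Finset V, IsStableSet G S ∧ S.card = stabNum G :=
  Nat.sSup_mem (stabSet_nonempty G) (stabSet_bdd G)

lemma matchSet_bdd (G : SimpleGraph V) :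
    BddAbove {n : ℕ | ∃ M : Finset (Sym2 V), IsMatchingSet G M ∧ M.card = n} :=
  ⟨Fintype.card (Sym2 V), fun n ⟨M, _, hM⟩ => hM ▸ M.card_le_univ⟩

lemma matchSet_nonempty (G : SimpleGraph V) :
    {n : ℕ | ∃ M : Finset (Sym2 V), IsMatchingSet G M ∧ M.card = n}.Nonempty :=
  ⟨0, ∅, ⟨by simp, fun e he => by simp at he⟩, rfl⟩

lemma card_le_matchNum (G : SimpleGraph V) {M : Finset (Sym2 V)} (hM : IsMatchingSet G M) :
    M.card ≤ matchNum G :=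
  le_csSup (matchSet_bdd G) ⟨M, hM, rfl⟩

lemma exists_maxMatching (G : SimpleGraph V) :
    ∃ M : Finset (Sym2 V), IsMatchingSet G M ∧ M.card = matchNum G :=
  Nat.sSup_mem (matchSet_nonempty G) (matchSet_bdd G)

lemma stabNum_le_of_le {T G : SimpleGraph V} (h : T ≤ G) : stabNum G ≤ stabNum T := by
  obtain ⟨S, hS, hc⟩ := exists_stabSystem G
  exact hc ▸ card_le_stabNum T (fun u hu v hv hadj => hS u hu v hv (h hadj))

lemma matchNum_le_of_le {T G : SimpleGraph V} (h : T ≤ G) : matchNum T ≤ matchNum G := by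
  obtain ⟨M, hM, hc⟩ := exists_maxMatching T
  exact hc ▸ card_le_matchNum G ⟨fun e he => SimpleGraph.edgeSet_mono h (hM.1 he), hM.2⟩

end Aux

set_option linter.unusedSectionVars false
set_option linter.unusedVariables false

section Aux2
variable [Fintype V] [DecidableEq V]

lemma stab_add_match_le (G : SimpleGraph V) :
    stabNum G + matchNum G ≤ Fintype.card V := by
  classical
  obtain ⟨S, hS, hSc⟩ := exists_stabSystem G
  obtain ⟨M, hM, hMc⟩ := exists_maxMatching G
  -- for each e ∈ M pick an endpoint not in S
  have key : ∀ e ∈ M, ∃ v : V, v ∈ e ∧ v ∉ S := by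
    intro e he
    induction e with
    | h u v =>
      have hadj : G.Adj u v := hM.1 he
      by_cases hu : u ∈ S
      · by_cases hv : v ∈ S
        · exact absurd hadj (hS u hu v hv)
        · exact ⟨v, by simp, hv⟩
      · exact ⟨u, by simp, hu⟩
  choose f hf1 hf2 using key
  have hinj : ∀ (e : Sym2 V) (he : e ∈ M) (e' : Sym2 V) (he' : e' ∈ M),
      f e he = f e' he' → e = e' := by
    intro e he e' he' hfe
    by_contra hne
    exact hM.2 e he e' he' hne (f e he) ⟨hf1 e he, hfe ▸ hf1 e' he'⟩
  have hcard : M.card ≤ Sᶜ.card := by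
    rw [← Finset.card_attach (s := M)]
    apply Finset.card_le_card_of_injOn (fun e => f e.1 e.2)
    · intro e he
      simp [Finset.mem_compl, hf2 e.1 e.2]
    · intro e he e' he' hfe
      exact Subtype.ext (hinj e.1 e.2 e'.1 e'.2 hfe)
  have h1 := Finset.card_compl (α := V) S
  have h2 : S.card ≤ Fintype.card V := S.card_le_univ
  omega

end Aux2

section Konig
variable [Fintype V] [DecidableEq V]

open Classical in
lemma konig (G : SimpleGraph V) (A : Finset V)
    (hA : IsStableSet G A) (hA' : IsStableSet G Aᶜ) :
    Fintype.card V ≤ stabNum G + matchNum G := by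
  classical
  -- neighborhood of a set
  set N : Finset V → Finset V := fun T => Finset.univ.filter (fun v => ∃ a ∈ T, G.Adj a v)
    with hN
  -- minimize the cover size
  set P : Finset ℕ := A.powerset.image (fun T => A.card - T.card + (N T).card) with hP
  have hPne : P.Nonempty := ⟨A.card - (∅ : Finset V).card + (N ∅).card,
    Finset.mem_image.2 ⟨∅, Finset.empty_mem_powerset A, rfl⟩⟩
  set c := P.min' hPne with hc
  obtain ⟨T₀, hT₀A, hT₀c⟩ := Finset.mem_image.1 (P.min'_mem hPne)
  rw [Finset.mem_powerset] at hT₀A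
  have hmin : ∀ T ⊆ A, c ≤ A.card - T.card + (N T).card := fun T hT =>
    P.min'_le _ (Finset.mem_image.2 ⟨T, Finset.mem_powerset.2 hT, rfl⟩)
  have hcA : c ≤ A.card := by
    have := hmin ∅ (Finset.empty_subset A)
    simpa [hN] using this
  set d := A.card - c with hd
  -- the cover
  set C : Finset V := (A \ T₀) ∪ N T₀ with hC
  have hcover : ∀ u v : V, G.Adj u v → u ∈ C ∨ v ∈ C := by
    intro u v hadj
    by_cases hu : u ∈ A
    · by_cases hu0 : u ∈ T₀
      · right
        exact Finset.mem_union_right _ (Finset.mem_filter.2 ⟨Finset.mem_univ v, u, hu0, hadj⟩)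
      · exact Or.inl (Finset.mem_union_left _ (Finset.mem_sdiff.2 ⟨hu, hu0⟩))
    · by_cases hv : v ∈ A
      · by_cases hv0 : v ∈ T₀
        · left
          exact Finset.mem_union_right _
            (Finset.mem_filter.2 ⟨Finset.mem_univ u, v, hv0, hadj.symm⟩)
        · exact Or.inr (Finset.mem_union_left _ (Finset.mem_sdiff.2 ⟨hv, hv0⟩))
      · exact absurd hadj (hA' u (Finset.mem_compl.2 hu) v (Finset.mem_compl.2 hv))
  have hCcard : C.card ≤ c := by
    calc C.card ≤ (A \ T₀).card + (N T₀).card := Finset.card_union_le _ _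
    _ = A.card - T₀.card + (N T₀).card := by rw [Finset.card_sdiff_of_subset hT₀A]
    _ = c := hT₀c
  -- complement of the cover is stable
  have hstab : IsStableSet G Cᶜ := by
    intro u hu v hv hadj
    rcases hcover u v hadj with h | h
    · exact (Finset.mem_compl.1 hu) h
    · exact (Finset.mem_compl.1 hv) h
  have h1 : Fintype.card V - c ≤ stabNum G := by
    have := card_le_stabNum G hstab
    have := Finset.card_compl (α := V) C
    omega
  -- Hall's condition with d dummies
  set t : ↥A → Finset (V ⊕ Fin d) := fun a =>
    ((N {a.1}).image Sum.inl) ∪ ((Finset.univ : Finset (Fin d)).image Sum.inr) with ht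
  have hall : ∀ s : Finset ↥A, s.card ≤ (s.biUnion t).card := by
    intro s
    rcases s.eq_empty_or_nonempty with rfl | hs
    · simp
    set T : Finset V := s.image (fun a => a.1) with hT
    have hTcard : T.card = s.card := Finset.card_image_of_injective s Subtype.val_injective
    have hTA : T ⊆ A := by
      intro v hv
      obtain ⟨a, _, rfl⟩ := Finset.mem_image.1 hv
      exact a.2
    have hsub : ((N T).image Sum.inl) ∪ ((Finset.univ : Finset (Fin d)).image Sum.inr)
        ⊆ s.biUnion t := by
      intro x hx
      rcases Finset.mem_union.1 hx with hx | hx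
      · obtain ⟨v, hv, rfl⟩ := Finset.mem_image.1 hx
        obtain ⟨a, haT, hadj⟩ := (Finset.mem_filter.1 hv).2
        obtain ⟨a', ha's, ha'⟩ := Finset.mem_image.1 haT
        refine Finset.mem_biUnion.2 ⟨a', ha's, Finset.mem_union_left _ ?_⟩
        exact Finset.mem_image.2 ⟨v, Finset.mem_filter.2 ⟨Finset.mem_univ v, a'.1, by simp,
          ha' ▸ hadj⟩, rfl⟩
      · obtain ⟨a, has⟩ := hs
        exact Finset.mem_biUnion.2 ⟨a, has, Finset.mem_union_right _ hx⟩
    have hdisj : Disjoint ((N T).image Sum.inl)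
        ((Finset.univ : Finset (Fin d)).image Sum.inr) := by
      simp [Finset.disjoint_left]
    have hcard2 : (N T).card + d ≤ (s.biUnion t).card := by
      have := Finset.card_le_card hsub
      rwa [Finset.card_union_of_disjoint hdisj, Finset.card_image_of_injective _ Sum.inl_injective,
        Finset.card_image_of_injective _ Sum.inr_injective, Finset.card_univ,
        Fintype.card_fin] at this
    have := hmin T hTA
    have hTAcard : T.card ≤ A.card := Finset.card_le_card hTA
    omega
  obtain ⟨f, hfinj, hft⟩ := (Finset.all_card_le_biUnion_card_iff_exists_injective t).1 hall
  -- split according to where f lands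
  set A₁ : Finset ↥A := Finset.univ.filter (fun a => ∃ v : V, f a = Sum.inl v) with hA₁
  have hA₂ : (Finset.univ.filter (fun a : ↥A => ∃ i : Fin d, f a = Sum.inr i)).card ≤ d := by
    rcases (Finset.univ.filter
        (fun a : ↥A => ∃ i : Fin d, f a = Sum.inr i)).eq_empty_or_nonempty with hE | hE
    · rw [hE]; simp
    obtain ⟨a0, ha0⟩ := hE
    haveI : Nonempty (Fin d) := ⟨((Finset.mem_filter.1 ha0).2).choose⟩
    have h : (Finset.univ.filter (fun a : ↥A => ∃ i : Fin d, f a = Sum.inr i)).card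
        ≤ (Finset.univ : Finset (Fin d)).card := by
      apply Finset.card_le_card_of_injOn (fun a => if h : ∃ i : Fin d, f a = Sum.inr i
        then h.choose else Classical.arbitrary (Fin d))
      · intro a ha; exact Finset.mem_univ _
      · intro a ha b hb hab
        simp only [Finset.coe_filter, Set.mem_setOf_eq] at ha hb
        have hab' : (if h : ∃ i, f a = Sum.inr i then h.choose
            else Classical.arbitrary (Fin d)) = (if h : ∃ i, f b = Sum.inr i then h.choose
            else Classical.arbitrary (Fin d)) := hab
        rw [dif_pos ha.2, dif_pos hb.2] at hab'
        apply hfinj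
        rw [ha.2.choose_spec, hb.2.choose_spec, hab']
    simpa using h
  have hA₁card : A.card - d ≤ A₁.card := by
    have hset : (Finset.univ.filter (fun a : ↥A => ∃ i : Fin d, f a = Sum.inr i)) =
        (Finset.univ.filter (fun a : ↥A => ¬ ∃ v : V, f a = Sum.inl v)) := by
      ext a
      simp only [Finset.mem_filter, Finset.mem_univ, true_and]
      cases hfa : f a <;> simp
    have hsplit : A₁.card + (Finset.univ.filter
        (fun a : ↥A => ∃ i : Fin d, f a = Sum.inr i)).card = A.card := by
      rw [hA₁, hset, Finset.card_filter_add_card_filter_not, Finset.card_univ,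
        Fintype.card_coe]
    omega
  -- extract the matching
  have key : ∀ a ∈ A₁, ∃ v : V, f a = Sum.inl v ∧ G.Adj a.1 v := by
    intro a ha
    obtain ⟨v, hv⟩ := (Finset.mem_filter.1 ha).2
    refine ⟨v, hv, ?_⟩
    have hm := hft a
    rw [hv] at hm
    rcases Finset.mem_union.1 hm with h | h
    · obtain ⟨w, hw, hweq⟩ := Finset.mem_image.1 h
      obtain ⟨b, hb, hadj⟩ := (Finset.mem_filter.1 hw).2
      simp only [Finset.mem_singleton] at hb
      rw [Sum.inl.injEq] at hweq
      rw [← hweq, ← hb]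
      exact hadj
    · obtain ⟨i, _, hieq⟩ := Finset.mem_image.1 h
      exact absurd hieq (by simp)
  choose g hg1 hg2 using key
  have hgA : ∀ (a : ↥A) (ha : a ∈ A₁), g a ha ∉ A := by
    intro a ha hmem
    exact hA a.1 a.2 (g a ha) hmem (hg2 a ha)
  set M₀ : Finset (Sym2 V) := A₁.attach.image (fun a => s(a.1.1, g a.1 a.2)) with hM₀
  have hinj2 : ∀ (a : {x // x ∈ A₁}) (b : {x // x ∈ A₁}),
      s(a.1.1, g a.1 a.2) = s(b.1.1, g b.1 b.2) → a = b := by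
    intro a b h
    rw [Sym2.eq_iff] at h
    rcases h with ⟨h1, h2⟩ | ⟨h1, h2⟩
    · exact Subtype.ext (Subtype.ext h1)
    · exact absurd (h1 ▸ a.1.2) (hgA b.1 b.2)
  have hM₀match : IsMatchingSet G M₀ := by
    constructor
    · intro e he
      simp only [hM₀, Finset.coe_image, Set.mem_image] at he
      obtain ⟨a, _, rfl⟩ := he
      exact (hg2 a.1 a.2)
    · intro e he f' hf' hne v hv
      simp only [hM₀, Finset.mem_image] at he hf'
      obtain ⟨a, _, rfl⟩ := he
      obtain ⟨b, _, rfl⟩ := hf'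
      obtain ⟨hv1, hv2⟩ := hv
      rw [Sym2.mem_iff] at hv1 hv2
      have hab : a = b := by
        rcases hv1 with rfl | rfl <;> rcases hv2 with h | h
        · exact Subtype.ext (Subtype.ext h)
        · exact absurd (h ▸ a.1.2) (hgA b.1 b.2)
        · exact absurd (by rw [h]; exact b.1.2) (hgA a.1 a.2)
        · have hff : f a.1 = f b.1 := by rw [hg1 a.1 a.2, hg1 b.1 b.2, h]
          exact Subtype.ext (hfinj hff)
      exact hne (by subst hab; rfl)
  have hM₀card : M₀.card = A₁.card := by
    rw [hM₀, Finset.card_image_of_injOn (fun a _ b _ h => hinj2 a b h), Finset.card_attach]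
  have h2 : c ≤ matchNum G := by
    have hle := card_le_matchNum G hM₀match
    omega
  have hAn : A.card ≤ Fintype.card V := A.card_le_univ
  omega
end Konig

section Tree
open SimpleGraph

lemma reachable_sup_edge {K : SimpleGraph V} {a b x y : V}
    (h : (K ⊔ fromEdgeSet {s(a, b)}).Reachable x y) :
    K.Reachable x y ∨ (K.Reachable x a ∧ K.Reachable b y) ∨
      (K.Reachable x b ∧ K.Reachable a y) := by
  obtain ⟨p⟩ := h
  induction p with
  | nil => exact Or.inl (Reachable.refl _)
  | @cons x w y hadj p ih =>
    rcases hadj with hK | hF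
    · have r : K.Reachable x w := hK.reachable
      rcases ih with h1 | ⟨h2a, h2b⟩ | ⟨h3a, h3b⟩
      · exact Or.inl (r.trans h1)
      · exact Or.inr (Or.inl ⟨r.trans h2a, h2b⟩)
      · exact Or.inr (Or.inr ⟨r.trans h3a, h3b⟩)
    · have hxw : s(x, w) = s(a, b) := by
        simpa using hF.1
      rw [Sym2.eq_iff] at hxw
      rcases hxw with ⟨rfl, rfl⟩ | ⟨rfl, rfl⟩
      · rcases ih with h1 | ⟨h2a, h2b⟩ | ⟨h3a, h3b⟩
        · exact Or.inr (Or.inl ⟨Reachable.refl _, h1⟩)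
        · exact Or.inr (Or.inl ⟨Reachable.refl _, h2b⟩)
        · exact Or.inl h3b
      · rcases ih with h1 | ⟨h2a, h2b⟩ | ⟨h3a, h3b⟩
        · exact Or.inr (Or.inr ⟨Reachable.refl _, h1⟩)
        · exact Or.inl h2b
        · exact Or.inr (Or.inr ⟨Reachable.refl _, h3b⟩)

lemma not_reachable_of_isolated {K : SimpleGraph V} {u v : V}
    (hiso : ∀ w, ¬ K.Adj u w) (huv : u ≠ v) : ¬ K.Reachable u v := by
  rintro ⟨p⟩
  cases p with
  | nil => exact huv rfl
  | cons h _ => exact hiso _ h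

lemma acyclic_sup_edge {K : SimpleGraph V} {a b : V} (hK : K.IsAcyclic)
    (hab : ¬ K.Reachable a b) :
    (K ⊔ fromEdgeSet {s(a, b)}).IsAcyclic := by
  have hane : a ≠ b := fun h => hab (h ▸ Reachable.refl a)
  rw [isAcyclic_iff_forall_adj_isBridge]
  intro u v hadj
  rw [isBridge_iff]
  change ¬ ((K ⊔ fromEdgeSet {s(a, b)}) \ fromEdgeSet {s(u, v)}).Reachable u v
  by_cases he : s(u, v) = s(a, b)
  · -- removing the new edge
    have hKe : (K ⊔ fromEdgeSet {s(a, b)}) \ fromEdgeSet {s(u, v)}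
        = K \ fromEdgeSet {s(u, v)} := by
      ext x y
      simp only [sdiff_adj, sup_adj, fromEdgeSet_adj, he]
      tauto
    rw [hKe]
    intro hr
    have hr' : K.Reachable u v := hr.mono (by intro x y h; exact h.1)
    rw [Sym2.eq_iff] at he
    rcases he with ⟨rfl, rfl⟩ | ⟨rfl, rfl⟩
    · exact hab hr'
    · exact hab hr'.symm
  · -- removing an old edge
    have hKadj : K.Adj u v := by
      rcases hadj with h | h
      · exact h
      · exact absurd (by simpa using h.1) he
    have hbridge := (isAcyclic_iff_forall_adj_isBridge.1 hK) hKadj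
    rw [isBridge_iff] at hbridge
    have hsplit : (K ⊔ fromEdgeSet {s(a, b)}) \ fromEdgeSet {s(u, v)}
        = (K \ fromEdgeSet {s(u, v)}) ⊔ fromEdgeSet {s(a, b)} := by
      ext x y
      simp only [sdiff_adj, sup_adj, fromEdgeSet_adj, Set.mem_singleton_iff]
      constructor
      · rintro ⟨h1 | ⟨h1, h1'⟩, h2⟩
        · exact Or.inl ⟨h1, h2⟩
        · exact Or.inr ⟨h1, h1'⟩
      · rintro (⟨h1, h2⟩ | ⟨h1, h1'⟩)
        · exact ⟨Or.inl h1, h2⟩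
        · refine ⟨Or.inr ⟨h1, h1'⟩, fun h2 => he ?_⟩
          rw [← h2.1, h1]
      
    rw [hsplit]
    intro hr
    rcases reachable_sup_edge hr with h1 | ⟨h2a, h2b⟩ | ⟨h3a, h3b⟩
    · exact hbridge h1
    · apply hab
      have hKuv : K.Reachable u v := hKadj.reachable
      have r2a : K.Reachable u a := h2a.mono (fun x y (h : (K \ fromEdgeSet {s(u,v)}).Adj x y) => h.1)
      have r2b : K.Reachable b v := h2b.mono (fun x y (h : (K \ fromEdgeSet {s(u,v)}).Adj x y) => h.1)
      exact (r2a.symm.trans hKuv).trans r2b.symm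
    · apply hab
      have hKuv : K.Reachable u v := hKadj.reachable
      have r3a : K.Reachable u b := h3a.mono (fun x y (h : (K \ fromEdgeSet {s(u,v)}).Adj x y) => h.1)
      have r3b : K.Reachable a v := h3b.mono (fun x y (h : (K \ fromEdgeSet {s(u,v)}).Adj x y) => h.1)
      exact (r3b.trans hKuv.symm).trans r3a

end Tree

section Tree2
open SimpleGraph
variable [Fintype V] [DecidableEq V]

lemma exists_spanning_tree_of_forest (G F : SimpleGraph V) (hFG : F ≤ G)
    (hF : F.IsAcyclic) (hG : G.Connected) :
    ∃ T : SimpleGraph V, F ≤ T ∧ T ≤ G ∧ T.IsTree := by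
  classical
  set S : Set ℕ := {n | ∃ H : SimpleGraph V, F ≤ H ∧ H ≤ G ∧ H.IsAcyclic ∧ H.edgeSet.ncard = n}
    with hS
  have hSne : S.Nonempty := ⟨F.edgeSet.ncard, F, le_refl F, hFG, hF, rfl⟩
  have hSbdd : BddAbove S := by
    refine ⟨Fintype.card (Sym2 V), ?_⟩
    rintro n ⟨H, _, _, _, rfl⟩
    refine le_trans (Set.ncard_le_ncard (Set.subset_univ _) Set.finite_univ) ?_
    simp [Set.ncard_univ, Nat.card_eq_fintype_card]
  obtain ⟨H, hFH, hHG, hHa, hHcard⟩ := Nat.sSup_mem hSne hSbdd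
  refine ⟨H, hFH, hHG, ?_, ?_⟩
  · -- connected
    by_contra hcon
    have hedge : ∃ a b : V, G.Adj a b ∧ ¬ H.Reachable a b := by
      by_contra hne
      push_neg at hne
      apply hcon
      rw [SimpleGraph.connected_iff]
      refine ⟨?_, hG.nonempty⟩
      · intro x y
        obtain ⟨p⟩ := hG.preconnected x y
        induction p with
        | nil => exact Reachable.refl _
        | cons h p ih => exact (hne _ _ h).trans ih
    obtain ⟨a, b, hGab, hHab⟩ := hedge
    set H' := H ⊔ fromEdgeSet {s(a, b)} with hH'
    have hane : a ≠ b := hGab.ne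
    have hH'G : H' ≤ G := by
      rw [hH', sup_le_iff]
      refine ⟨hHG, ?_⟩
      intro x y h
      obtain ⟨h1, h2⟩ := h
      have h1' : s(x, y) = s(a, b) := h1
      rw [Sym2.eq_iff] at h1'
      rename' h1' => h1
      rcases h1 with ⟨rfl, rfl⟩ | ⟨rfl, rfl⟩
      · exact hGab
      · exact hGab.symm
    have hH'a : H'.IsAcyclic := acyclic_sup_edge hHa hHab
    have hnotmem : s(a, b) ∉ H.edgeSet := fun h =>
      hHab (SimpleGraph.Adj.reachable h)
    have hH'card : H'.edgeSet.ncard = H.edgeSet.ncard + 1 := by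
      rw [hH', edgeSet_sup, edgeSet_fromEdgeSet]
      have hdiag : {s(a, b)} \ {e : Sym2 V | e.IsDiag} = {s(a, b)} := by
        ext e
        simp only [Set.mem_diff, Set.mem_singleton_iff, Set.mem_setOf_eq]
        constructor
        · exact fun h => h.1
        · rintro rfl
          exact ⟨rfl, by simp [hane]⟩
      rw [show Sym2.diagSet = {e : Sym2 V | e.IsDiag} from rfl, hdiag, Set.union_singleton, Set.ncard_insert_of_notMem hnotmem
        (H.edgeSet.toFinite)]
    have : H'.edgeSet.ncard ≤ sSup S :=
      le_csSup hSbdd ⟨H', le_trans hFH le_sup_left, hH'G, hH'a, rfl⟩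
    omega
  · exact hHa

lemma matching_acyclic (G : SimpleGraph V) {M : Finset (Sym2 V)}
    (hM : IsMatchingSet G M) : (SimpleGraph.fromEdgeSet (↑M : Set (Sym2 V))).IsAcyclic := by
  rw [isAcyclic_iff_forall_adj_isBridge]
  intro u v hadj
  rw [isBridge_iff]
  change ¬ (fromEdgeSet (↑M : Set (Sym2 V)) \ fromEdgeSet {s(u, v)}).Reachable u v
  obtain ⟨huv0, hne⟩ := hadj
  have huv : s(u, v) ∈ M := huv0
  apply not_reachable_of_isolated _ hne
  intro w hw
  obtain ⟨hw1, hw2⟩ := hw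
  obtain ⟨hw10, hwne⟩ := hw1
  have hw1' : s(u, w) ∈ M := hw10
  have hdiff : s(u, w) ≠ s(u, v) := by
    intro h
    exact hw2 ⟨h, hwne⟩
  exact hM.2 _ hw1' _ huv hdiff u ⟨by simp, by simp⟩

end Tree2


/-- Every connected bipartite graph `G` has a spanning tree `T`
with `α(T) = α(G)`. -/
theorem stmt10 {V : Type*} [Fintype V] [DecidableEq V] (G : SimpleGraph V)
    (hc : G.Connected) (hbip : IsBipartiteGr G) :
    ∃ T : SimpleGraph V, T ≤ G ∧ T.IsTree ∧ stabNum T = stabNum G := by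
  classical
  obtain ⟨A, hA, hA'⟩ := hbip
  obtain ⟨M, hM, hMc⟩ := exists_maxMatching G
  have hFG : SimpleGraph.fromEdgeSet (↑M : Set (Sym2 V)) ≤ G := by
    have := SimpleGraph.fromEdgeSet_mono hM.1
    rwa [SimpleGraph.fromEdgeSet_edgeSet] at this
  obtain ⟨T, hFT, hTG, hTree⟩ :=
    exists_spanning_tree_of_forest G _ hFG (matching_acyclic G hM) hc
  refine ⟨T, hTG, hTree, ?_⟩
  have hMT : IsMatchingSet T M := by
    refine ⟨?_, hM.2⟩
    intro e he
    apply SimpleGraph.edgeSet_mono hFT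
    rw [SimpleGraph.edgeSet_fromEdgeSet]
    exact ⟨he, SimpleGraph.not_isDiag_of_mem_edgeSet G (hM.1 he)⟩
  have h1 : stabNum G ≤ stabNum T := stabNum_le_of_le hTG
  have h2 := stab_add_match_le T
  have h3 := card_le_matchNum T hMT
  have h4 := konig G A hA hA'
  omega
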